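/- arXiv:1111.5562 — 8 statements merged into one kernel-verified Lean document; each statement's English description precedes it below -/
import Mathlib

section
/- Let (A,G,α) be a dynamical system with A a commutative unital topological algebra over ℂ. Suppose there exists a family (π_j,V_j)_{j∈J} of continuous representations of G on topological ℂ-vector spaces which separates the points of G and such that the evaluation map ev^j_χ : Γ_A V_j → V_j is surjective for every j ∈ J and every χ ∈ Γ_A. Then the induced action σ : Γ_A × G → Γ_A, (χ,g) ↦ χ ∘ α(g), is free; that is, if χ ∘ α(g) = χ for some χ ∈ Γ_A, then g = 1_G. -/
open scoped TensorProduct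

/-- **Freeness of the induced action** (Theorem 3.9 of the paper).
If `(A, G, α)` is a dynamical system with `A` a commutative unital topological `ℂ`-algebra,
and there is a family of continuous point-separating representations of `G` such that all
evaluation maps on the generalized spaces of sections are surjective, then the induced
action of `G` on the spectrum of `A` is free. -/
theorem freeness_of_induced_action
    {A : Type*} [CommRing A] [Algebra ℂ A] [TopologicalSpace A] [IsTopologicalRing A]
    {G : Type*} [Group G] [TopologicalSpace G] [IsTopologicalGroup G]
    (α : G →* (A ≃ₐ[ℂ] A))
    (hα : Continuous fun p : G × A => α p.1 p.2)
    {J : Type*} (V : J → Type*)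
    [∀ j, AddCommGroup (V j)] [∀ j, Module ℂ (V j)]
    [∀ j, TopologicalSpace (V j)] [∀ j, IsTopologicalAddGroup (V j)]
    [∀ j, ContinuousSMul ℂ (V j)]
    (π : ∀ j, G →* (V j ≃ₗ[ℂ] V j))
    (hπcont : ∀ j, Continuous fun p : G × V j => π j p.1 p.2)
    (hsep : ∀ g : G, g ≠ 1 → ∃ j, π j g ≠ 1)
    (hsurj : ∀ (j : J) (χ : A →ₐ[ℂ] ℂ) (v : V j),
      ∃ s : A ⊗[ℂ] V j,
        (∀ g : G, TensorProduct.map (α g).toLinearMap LinearMap.id s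
            = TensorProduct.map LinearMap.id ((π j g⁻¹) : V j →ₗ[ℂ] V j) s) ∧
        ((TensorProduct.lid ℂ (V j)).toLinearMap.comp
            (TensorProduct.map χ.toLinearMap LinearMap.id)) s = v) :
    ∀ (χ : A →ₐ[ℂ] ℂ) (g : G), χ.comp (α g).toAlgHom = χ → g = 1 := by
  intro χ g hχ
  by_contra hg
  obtain ⟨j, hj⟩ := hsep g hg
  set E := (TensorProduct.lid ℂ (V j)).toLinearMap.comp
      (TensorProduct.map χ.toLinearMap LinearMap.id) with hE
  have hLHS : ∀ t : A ⊗[ℂ] (V j),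
      E (TensorProduct.map (α g).toLinearMap LinearMap.id t) = E t := by
    intro t
    induction t using TensorProduct.induction_on with
    | zero => simp
    | tmul a w =>
      have hχa : χ ((α g) a) = χ a := DFunLike.congr_fun hχ a
      simp [hE, TensorProduct.map_tmul, hχa]
    | add x y hx hy => simp only [map_add, hx, hy]
  have hRHS : ∀ t : A ⊗[ℂ] (V j),
      E (TensorProduct.map LinearMap.id ((π j g⁻¹) : V j →ₗ[ℂ] V j) t)
        = (π j g⁻¹) (E t) := by
    intro t
    induction t using TensorProduct.induction_on with
    | zero => simp
    | tmul a w => simp [hE, TensorProduct.map_tmul, map_smul]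
    | add x y hx hy => simp only [map_add, hx, hy]
  have key : ∀ v : V j, (π j g⁻¹) v = v := by
    intro v
    obtain ⟨s, hinv, hev⟩ := hsurj j χ v
    have h2 := congrArg E (hinv g)
    rw [hLHS s, hRHS s, hev] at h2
    exact h2.symm
  have hgv : ∀ v : V j, (π j g) v = v := by
    intro v
    have h := key ((π j g) v)
    have h' : (π j g⁻¹) ((π j g) v) = v := by
      have : (π j g⁻¹) ((π j g) v) = (π j (g⁻¹ * g)) v := by
        rw [map_mul]; rfl
      rw [this, inv_mul_cancel, map_one]; rfl
    rw [h'] at h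
    exact h.symm
  apply hj
  ext v
  exact hgv v
end

section
/- Let A be a commutative unital topological algebra over ℂ, G a compact Hausdorff abelian topological group, (A,G,α) a dynamical system, φ ∈ Ĝ a continuous character, and let a_φ be an invertible element of A lying in the isotypic component A_φ. Then the map Ψ_φ : A^G → A_φ, a ↦ a_φ·a, is a bijection from the fixed point algebra A^G onto A_φ, and it is A^G-linear (Ψ_φ(ab) = a·Ψ_φ(b) for a,b ∈ A^G); in particular A_φ is a free A^G-module of rank one. -/
/-- Proposition 5.8 of the paper: let `(A, G, α)` be a dynamical system with `A` a
commutative unital topological `ℂ`-algebra and `G` a compact Hausdorff abelian group,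
`φ` a continuous character of `G` and `a_φ` an invertible element of `A` lying in the
isotypic component `A_φ`.  Then `Ψ_φ : A^G → A_φ, a ↦ a_φ · a` is a bijection from the
fixed point algebra onto `A_φ`, and it is `A^G`-linear; in particular `A_φ` is a free
`A^G`-module of rank one. -/
theorem isotypic_component_free_module
    {A : Type*} [CommRing A] [Algebra ℂ A] [TopologicalSpace A] [IsTopologicalRing A]
    {G : Type*} [CommGroup G] [TopologicalSpace G] [IsTopologicalGroup G]
    [CompactSpace G] [T2Space G]
    (α : G →* (A ≃ₐ[ℂ] A))
    (hα : Continuous fun p : G × A => α p.1 p.2)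
    (φ : G →* ℂˣ) (hφ : Continuous fun g : G => (φ g : ℂ))
    (aφ : Aˣ) (haφ : ∀ g : G, α g (aφ : A) = (φ g : ℂ) • (aφ : A)) :
    Set.BijOn (fun a : A => (aφ : A) * a)
      {a : A | ∀ g : G, α g a = a}
      {a : A | ∀ g : G, α g a = (φ g : ℂ) • a}
    ∧ ∀ a b : A, (∀ g : G, α g a = a) → (∀ g : G, α g b = b) →
        (aφ : A) * (a * b) = a * ((aφ : A) * b) := by
  have hinv : ∀ g : G, α g (↑aφ⁻¹ : A) = ((φ g : ℂ))⁻¹ • (↑aφ⁻¹ : A) := by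
    intro g
    have h1 : α g ((aφ : A) * (↑aφ⁻¹ : A)) = 1 := by
      rw [Units.mul_inv]; exact map_one (α g)
    rw [map_mul, haφ g] at h1
    have h3 := congrArg (fun x => ((φ g : ℂ))⁻¹ • ((↑aφ⁻¹ : A) * x)) h1
    rw [mul_one, smul_mul_assoc, mul_smul_comm, smul_smul,
      inv_mul_cancel₀ (Units.ne_zero _), one_smul, ← mul_assoc, Units.inv_mul,
      one_mul] at h3
    exact h3
  refine ⟨⟨?_, ?_, ?_⟩, ?_⟩
  · intro a ha g
    simp only [Set.mem_setOf_eq] at ha ⊢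
    rw [map_mul, haφ g, ha g, smul_mul_assoc]
  · intro a ha b hb hab
    exact (Units.mul_right_inj aφ).mp hab
  · intro b hb
    refine ⟨(↑aφ⁻¹ : A) * b, ?_, ?_⟩
    · intro g
      rw [map_mul, hinv g, hb g, smul_mul_assoc, mul_smul_comm, smul_smul,
        inv_mul_cancel₀ (Units.ne_zero _), one_smul]
    · simp only
      rw [← mul_assoc, Units.mul_inv, one_mul]
  · intro a b _ _
    ring
end

section
/- Let A be a unital topological algebra over ℂ whose underlying topological space is a topological ℂ-vector space and whose group of units A^× is open in A (for instance, a continuous inverse algebra). Then the set of all unital ℂ-algebra homomorphisms χ : A → ℂ is an equicontinuous family of maps A → ℂ; in particular, every such homomorphism is continuous. -/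
open scoped Topology

/-- Remark 7.2 (a) of the paper: if `A` is a unital topological `ℂ`-algebra whose
underlying space is a topological `ℂ`-vector space and whose group of units is open
(e.g. a continuous inverse algebra), then the set of all unital `ℂ`-algebra
homomorphisms `A → ℂ` is an equicontinuous family; in particular each such
homomorphism is continuous. -/
theorem algHoms_equicontinuous_of_isOpen_units
    {A : Type*} [Ring A] [Algebra ℂ A] [TopologicalSpace A] [IsTopologicalRing A]
    [ContinuousSMul ℂ A]
    (hopen : IsOpen {a : A | IsUnit a}) :
    (∀ a₀ : A, ∀ ε > (0 : ℝ), ∃ W ∈ 𝓝 a₀, ∀ a ∈ W, ∀ χ : A →ₐ[ℂ] ℂ, ‖χ a - χ a₀‖ < ε)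
    ∧ ∀ χ : A →ₐ[ℂ] ℂ, Continuous χ := by
  -- χ of a unit is nonzero
  have hunit : ∀ (χ : A →ₐ[ℂ] ℂ) (u : A), IsUnit u → χ u ≠ 0 := by
    intro χ u hu
    obtain ⟨x, rfl⟩ := hu
    intro h0
    have h1 : χ (x : A) * χ ((x⁻¹ : Aˣ) : A) = 1 := by
      rw [← map_mul, Units.mul_inv, map_one]
    rw [h0, zero_mul] at h1
    exact zero_ne_one h1
  -- a neighborhood of 0 consisting of elements a with 1 + a a unit
  have hU : {a : A | IsUnit a} ∈ 𝓝 (1 : A) := hopen.mem_nhds (by simp)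
  have hW0 : {a : A | IsUnit (1 + a)} ∈ 𝓝 (0 : A) := by
    have hc : Continuous fun a : A => 1 + a := continuous_const.add continuous_id
    have h2 := hc.tendsto 0
    simp only [add_zero] at h2
    exact h2 hU
  -- continuity of scalar multiplication at (0,0)
  have hsmul : Filter.Tendsto (fun p : ℂ × A => p.1 • p.2) (𝓝 (0, 0)) (𝓝 (0 : A)) := by
    have h3 := (continuous_smul : Continuous fun p : ℂ × A => p.1 • p.2).tendsto ((0 : ℂ), (0 : A))
    simpa using h3
  obtain ⟨s, hs, V, hV, hsV⟩ := mem_nhds_prod_iff.mp (hsmul hW0)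
  obtain ⟨δ, hδ, hball⟩ := Metric.mem_nhds_iff.mp hs
  -- uniform bound on V
  have hbound : ∀ (χ : A →ₐ[ℂ] ℂ), ∀ v ∈ V, ‖χ v‖ < 2 / δ := by
    intro χ v hv
    by_contra h
    push_neg at h
    set lam := χ v with hlam
    have hlamne : lam ≠ 0 := by
      intro h0; rw [h0, norm_zero] at h
      exact absurd h (not_le.mpr (by positivity))
    have hnorm : ‖(-lam⁻¹ : ℂ)‖ < δ := by
      rw [norm_neg, norm_inv]
      calc ‖lam‖⁻¹ ≤ (2 / δ)⁻¹ := by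
            exact inv_anti₀ (by positivity) h
        _ = δ / 2 := by field_simp
        _ < δ := by linarith
    have hmem : ((-lam⁻¹, v) : ℂ × A) ∈ s ×ˢ V := by
      refine ⟨hball ?_, hv⟩
      simpa [Metric.mem_ball] using hnorm
    have hu : IsUnit (1 + (-lam⁻¹) • v) := hsV hmem
    refine hunit χ _ hu ?_
    rw [map_add, map_one, map_smul, smul_eq_mul, ← hlam, neg_mul,
      inv_mul_cancel₀ hlamne]
    ring
  -- equicontinuity
  have H : ∀ a₀ : A, ∀ ε > (0 : ℝ), ∃ W ∈ 𝓝 a₀, ∀ a ∈ W, ∀ χ : A →ₐ[ℂ] ℂ,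
      ‖χ a - χ a₀‖ < ε := by
    intro a₀ ε hε
    set r : ℝ := ε * δ / 2 with hr
    have hrpos : 0 < r := by positivity
    have hrne : ((r : ℂ)) ≠ 0 := by
      exact_mod_cast ne_of_gt hrpos
    have hcont : Continuous fun a : A => ((r : ℂ))⁻¹ • (a - a₀) :=
      continuous_const.smul ((continuous_id.sub continuous_const))
    have hmemW : (fun a : A => ((r : ℂ))⁻¹ • (a - a₀)) ⁻¹' V ∈ 𝓝 a₀ := by
      apply hcont.continuousAt.preimage_mem_nhds
      simpa using hV
    refine ⟨_, hmemW, ?_⟩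
    intro a ha χ
    have hvV : ((r : ℂ))⁻¹ • (a - a₀) ∈ V := ha
    set v : A := ((r : ℂ))⁻¹ • (a - a₀) with hv
    have hav : a - a₀ = (r : ℂ) • v := by
      rw [hv, smul_inv_smul₀ hrne]
    have hχ : χ a - χ a₀ = (r : ℂ) * χ v := by
      rw [← map_sub, hav, map_smul, smul_eq_mul]
    rw [hχ, norm_mul]
    have hnr : ‖((r : ℂ))‖ = r := by
      rw [Complex.norm_real, Real.norm_eq_abs, abs_of_pos hrpos]
    rw [hnr]
    calc r * ‖χ v‖ < r * (2 / δ) := by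
          exact mul_lt_mul_of_pos_left (hbound χ v hvV) hrpos
      _ = ε := by field_simp [hr]; rw [hr]; ring
  refine ⟨H, ?_⟩
  intro χ
  rw [continuous_iff_continuousAt]
  intro a₀
  rw [ContinuousAt, Metric.tendsto_nhds]
  intro ε hε
  obtain ⟨W, hW, hWlt⟩ := H a₀ ε hε
  filter_upwards [hW] with a ha
  rw [dist_eq_norm]
  exact hWlt a ha χ
end

section
/- Let A be a commutative unital continuous inverse algebra over ℂ, G a compact Hausdorff topological group, and (A,G,α) a dynamical system admitting a family (π_j,V_j)_{j∈J} of continuous representations of G on topological ℂ-vector spaces that separates the points of G and such that the evaluation map ev^j_χ : Γ_A V_j → V_j is surjective for every j ∈ J and every χ ∈ Γ_A. Then the induced action σ : Γ_A × G → Γ_A, (χ,g) ↦ χ ∘ α(g), is continuous and free, the map Γ_A × G → Γ_A × Γ_A, (χ,g) ↦ (χ, χ ∘ α(g)), is a proper map (so the action is proper), each orbit map G → χ·G is a homeomorphism onto the orbit with its subspace topology, and the orbit space Γ_A/G with the quotient topology is Hausdorff; that is, (Γ_A, Γ_A/G, G, σ, pr) is a topological principal bundle. -/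
open scoped Topology TensorProduct Pointwise
open Filter

/-- The topology of pointwise convergence on the spectrum `Γ_A = Hom_alg(A, ℂ)`. -/
noncomputable instance algHomPointwiseTopology (A : Type*) [Semiring A] [Algebra ℂ A] :
    TopologicalSpace (A →ₐ[ℂ] ℂ) :=
  TopologicalSpace.induced (fun χ : A →ₐ[ℂ] ℂ => (χ : A → ℂ)) Pi.topologicalSpace

section aux

variable {A : Type*} [CommRing A] [Algebra ℂ A] [TopologicalSpace A] [IsTopologicalRing A]
    [ContinuousSMul ℂ A]

/-- Characters of a continuous inverse algebra are uniformly bounded by `1` on a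
balanced `0`-neighborhood. -/
lemma cia_char_bound (hopen : IsOpen {a : A | IsUnit a}) :
    ∃ W ∈ 𝓝 (0 : A), Balanced ℂ W ∧ ∀ (χ : A →ₐ[ℂ] ℂ), ∀ a ∈ W, ‖χ a‖ ≤ 1 := by
  have h1 : {a : A | IsUnit a} ∈ 𝓝 (1 : A) := hopen.mem_nhds isUnit_one
  have hc : Continuous fun u : A => 1 + u := continuous_const.add continuous_id
  have hU : (fun u : A => 1 + u) ⁻¹' {a : A | IsUnit a} ∈ 𝓝 (0 : A) := by
    have := hc.continuousAt (x := (0 : A))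
    exact this.preimage_mem_nhds (by simpa using h1)
  obtain ⟨W, ⟨hW, hbal⟩, hWU⟩ := (nhds_basis_balanced ℂ A).mem_iff.mp hU
  refine ⟨W, hW, hbal, fun χ a ha => ?_⟩
  by_contra hgt
  push_neg at hgt
  set c : ℂ := χ a with hc'
  have hcne : c ≠ 0 := by
    intro h; rw [h] at hgt; simp at hgt; norm_num at hgt
  have hnorm : ‖-c⁻¹‖ ≤ 1 := by
    rw [norm_neg, norm_inv]
    exact inv_le_one_of_one_le₀ hgt.le
  have hmem : (-c⁻¹) • a ∈ W := hbal.smul_mem hnorm ha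
  have hunit : IsUnit (1 + (-c⁻¹) • a) := hWU hmem
  have hz : χ (1 + (-c⁻¹) • a) = 0 := by
    simp [map_add, map_smul, ← hc', neg_mul, inv_mul_cancel₀ hcne]
  exact (hunit.map χ).ne_zero hz

omit [TopologicalSpace A] [IsTopologicalRing A] [ContinuousSMul ℂ A] in
lemma cia_char_bound_smul {W : Set A}
    (hbd : ∀ (χ : A →ₐ[ℂ] ℂ), ∀ a ∈ W, ‖χ a‖ ≤ 1)
    (χ : A →ₐ[ℂ] ℂ) {ε : ℝ} (hε : 0 ≤ ε) {a : A} (ha : a ∈ (ε : ℂ) • W) :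
    ‖χ a‖ ≤ ε := by
  obtain ⟨w, hw, rfl⟩ := ha
  rw [map_smul]
  calc ‖(ε : ℂ) • χ w‖ = ε * ‖χ w‖ := by
        simp [norm_smul, abs_of_nonneg hε]
      _ ≤ ε * 1 := mul_le_mul_of_nonneg_left (hbd χ w hw) hε
      _ = ε := mul_one ε

/-- Continuity of the induced action on the spectrum. -/
lemma sigma_cont {G : Type*} [Group G] [TopologicalSpace G]
    (hopen : IsOpen {a : A | IsUnit a})
    (α : G →* (A ≃ₐ[ℂ] A))
    (hα : Continuous fun p : G × A => α p.1 p.2) :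
    Continuous fun p : (A →ₐ[ℂ] ℂ) × G => p.1.comp (α p.2).toAlgHom := by
  obtain ⟨W, hW, hbal, hbd⟩ := cia_char_bound hopen
  rw [continuous_induced_rng]
  rw [continuous_pi_iff]
  intro a
  rw [continuous_iff_continuousAt]
  rintro ⟨χ₀, g₀⟩
  have hcoe : Continuous fun χ : A →ₐ[ℂ] ℂ => χ (α g₀ a) :=
    (continuous_apply (α g₀ a)).comp continuous_induced_dom
  have h2 : Tendsto (fun p : (A →ₐ[ℂ] ℂ) × G => p.1 (α g₀ a) - χ₀ (α g₀ a))
      (𝓝 (χ₀, g₀)) (𝓝 0) := by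
    simpa using ((hcoe.comp continuous_fst).tendsto (χ₀, g₀)).sub_const (χ₀ (α g₀ a))
  have hd : Tendsto (fun p : (A →ₐ[ℂ] ℂ) × G => α p.2 a - α g₀ a)
      (𝓝 (χ₀, g₀)) (𝓝 0) := by
    have hg : Continuous fun g : G => α g a :=
      hα.comp (continuous_id.prodMk continuous_const)
    simpa using ((hg.comp continuous_snd).tendsto (χ₀, g₀)).sub_const (α g₀ a)
  have h1 : Tendsto (fun p : (A →ₐ[ℂ] ℂ) × G => p.1 (α p.2 a - α g₀ a))
      (𝓝 (χ₀, g₀)) (𝓝 (0 : ℂ)) := by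
    rw [NormedAddCommGroup.tendsto_nhds_zero]
    intro ε hε
    have hne : ((ε / 2 : ℝ) : ℂ) ≠ 0 := by
      simp [hε.ne']
    have hmem : ((ε / 2 : ℝ) : ℂ) • W ∈ 𝓝 (0 : A) := by
      have := (smul_mem_nhds_smul_iff₀ hne (s := W) (x := (0 : A))).mpr hW
      simpa using this
    filter_upwards [hd hmem] with p hp
    calc ‖p.1 (α p.2 a - α g₀ a)‖ ≤ ε / 2 :=
          cia_char_bound_smul hbd p.1 (by linarith) hp
      _ < ε := by linarith
  have hdecomp : ∀ p : (A →ₐ[ℂ] ℂ) × G,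
      p.1 (α p.2 a - α g₀ a) + (p.1 (α g₀ a) - χ₀ (α g₀ a))
        = p.1 (α p.2 a) - χ₀ (α g₀ a) := by
    intro p; rw [map_sub]; ring
  have := (h1.add h2).congr hdecomp
  rw [ContinuousAt, ← tendsto_sub_nhds_zero_iff]
  simpa using this

omit [TopologicalSpace A] [IsTopologicalRing A] [ContinuousSMul ℂ A] in
/-- The spectrum is a Hausdorff space. -/
lemma spectrum_t2 : T2Space (A →ₐ[ℂ] ℂ) := by
  have hemb : Topology.IsEmbedding (fun χ : A →ₐ[ℂ] ℂ => (χ : A → ℂ)) :=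
    ⟨⟨rfl⟩, DFunLike.coe_injective⟩
  exact hemb.t2Space

end aux

/-- Theorem 7.7 of the paper: let `A` be a commutative unital continuous inverse algebra
over `ℂ` (a topological `ℂ`-vector space with continuous multiplication, open unit group
and inversion continuous at `1`), `G` a compact Hausdorff group and `(A, G, α)` a free
dynamical system, i.e. one admitting a family of continuous point-separating
representations of `G` with all evaluation maps on the generalized section spaces
surjective.  Then the induced action `σ : Γ_A × G → Γ_A, (χ, g) ↦ χ ∘ α(g)` is
continuous and free, the map `(χ, g) ↦ (χ, χ ∘ α(g))` is proper, each orbit map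
`G → χ·G` is a homeomorphism onto the orbit, and the orbit space `Γ_A / G` is Hausdorff;
that is, `(Γ_A, Γ_A/G, G, σ, pr)` is a topological principal bundle. -/
theorem topological_principal_bundle_of_free_dynamical_system
    {A : Type*} [CommRing A] [Algebra ℂ A] [TopologicalSpace A] [IsTopologicalRing A]
    [ContinuousSMul ℂ A]
    (hopen : IsOpen {a : A | IsUnit a})
    (hinv : ContinuousAt (Ring.inverse : A → A) 1)
    {G : Type*} [Group G] [TopologicalSpace G] [IsTopologicalGroup G]
    [CompactSpace G] [T2Space G]
    (α : G →* (A ≃ₐ[ℂ] A))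
    (hα : Continuous fun p : G × A => α p.1 p.2)
    {J : Type*} (V : J → Type*)
    [∀ j, AddCommGroup (V j)] [∀ j, Module ℂ (V j)]
    [∀ j, TopologicalSpace (V j)] [∀ j, IsTopologicalAddGroup (V j)]
    [∀ j, ContinuousSMul ℂ (V j)]
    (π : ∀ j, G →* (V j ≃ₗ[ℂ] V j))
    (hπcont : ∀ j, Continuous fun p : G × V j => π j p.1 p.2)
    (hsep : ∀ g : G, g ≠ 1 → ∃ j, π j g ≠ 1)
    (hsurj : ∀ (j : J) (χ : A →ₐ[ℂ] ℂ) (v : V j),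
      ∃ s : A ⊗[ℂ] V j,
        (∀ g : G, TensorProduct.map (α g).toLinearMap LinearMap.id s
            = TensorProduct.map LinearMap.id ((π j g⁻¹) : V j →ₗ[ℂ] V j) s) ∧
        ((TensorProduct.lid ℂ (V j)).toLinearMap.comp
            (TensorProduct.map χ.toLinearMap LinearMap.id)) s = v)
    (S : Setoid (A →ₐ[ℂ] ℂ))
    (hS : ∀ χ χ' : A →ₐ[ℂ] ℂ, S.r χ χ' ↔ ∃ g : G, χ.comp (α g).toAlgHom = χ') :
    (Continuous fun p : (A →ₐ[ℂ] ℂ) × G => p.1.comp (α p.2).toAlgHom)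
    ∧ (∀ (χ : A →ₐ[ℂ] ℂ) (g : G), χ.comp (α g).toAlgHom = χ → g = 1)
    ∧ IsProperMap (fun p : (A →ₐ[ℂ] ℂ) × G => (p.1, p.1.comp (α p.2).toAlgHom))
    ∧ (∀ χ : A →ₐ[ℂ] ℂ, Topology.IsEmbedding fun g : G => χ.comp (α g).toAlgHom)
    ∧ T2Space (Quotient S) := by
  haveI hΓt2 : T2Space (A →ₐ[ℂ] ℂ) := spectrum_t2
  -- continuity of the action
  have hσ : Continuous fun p : (A →ₐ[ℂ] ℂ) × G => p.1.comp (α p.2).toAlgHom :=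
    sigma_cont hopen α hα
  -- composition rules
  have hcomp : ∀ (χ : A →ₐ[ℂ] ℂ) (g h : G),
      (χ.comp (α g).toAlgHom).comp (α h).toAlgHom = χ.comp (α (g * h)).toAlgHom := by
    intro χ g h; ext a; simp [map_mul]
  have hone : ∀ χ : A →ₐ[ℂ] ℂ, χ.comp (α (1 : G)).toAlgHom = χ := by
    intro χ; ext a; simp
  -- freeness
  have hfree : ∀ (χ : A →ₐ[ℂ] ℂ) (g : G), χ.comp (α g).toAlgHom = χ → g = 1 := by
    intro χ g hg
    by_contra hne
    obtain ⟨j, hj⟩ := hsep g hne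
    have hex : ∃ v : V j, (π j g) v ≠ v := by
      by_contra h; push_neg at h
      exact hj (by ext v; simpa using h v)
    obtain ⟨v, hv⟩ := hex
    obtain ⟨s, hsinv, hsev⟩ := hsurj j χ v
    set L := (TensorProduct.lid ℂ (V j)).toLinearMap.comp
        (TensorProduct.map χ.toLinearMap LinearMap.id) with hL
    have comp1 : L.comp (TensorProduct.map (α g).toLinearMap LinearMap.id) = L := by
      have h1 : L.comp (TensorProduct.map (α g).toLinearMap LinearMap.id)
          = (TensorProduct.lid ℂ (V j)).toLinearMap.comp
            (TensorProduct.map (χ.comp (α g).toAlgHom).toLinearMap LinearMap.id) := by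
        apply TensorProduct.ext'; intro a v; simp [hL]
      rw [h1, hg, ← hL]
    have comp2 : L.comp (TensorProduct.map LinearMap.id
          ((π j g⁻¹ : V j ≃ₗ[ℂ] V j) : V j →ₗ[ℂ] V j))
        = ((π j g⁻¹ : V j ≃ₗ[ℂ] V j) : V j →ₗ[ℂ] V j).comp L := by
      apply TensorProduct.ext'; intro a v; simp [hL]
    have e1 := LinearMap.congr_fun comp1 s
    have e2 := LinearMap.congr_fun comp2 s
    have hkey : v = ((π j) g⁻¹) v := by
      calc v = L s := hsev.symm
        _ = (L.comp (TensorProduct.map (α g).toLinearMap LinearMap.id)) s := e1.symm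
        _ = L (TensorProduct.map (α g).toLinearMap LinearMap.id s) := rfl
        _ = L (TensorProduct.map LinearMap.id ((π j g⁻¹ : V j ≃ₗ[ℂ] V j) : V j →ₗ[ℂ] V j) s) := by
              rw [hsinv g]
        _ = (L.comp (TensorProduct.map LinearMap.id
              ((π j g⁻¹ : V j ≃ₗ[ℂ] V j) : V j →ₗ[ℂ] V j))) s := rfl
        _ = ((π j) g⁻¹) (L s) := by rw [comp2]; rfl
        _ = ((π j) g⁻¹) v := by rw [hsev]
    refine hv ?_
    calc (π j g) v = (π j g) ((π j g⁻¹) v) := by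
          conv_lhs => rw [hkey]
      _ = ((π j g) * (π j g⁻¹)) v := rfl
      _ = (π j (g * g⁻¹)) v := by rw [map_mul]
      _ = v := by simp
  -- properness
  have hFcont : Continuous (fun p : (A →ₐ[ℂ] ℂ) × G =>
      (p.1, p.1.comp (α p.2).toAlgHom)) := continuous_fst.prodMk hσ
  have hproper : IsProperMap (fun p : (A →ₐ[ℂ] ℂ) × G =>
      (p.1, p.1.comp (α p.2).toAlgHom)) := by
    rw [isProperMap_iff_ultrafilter]
    refine ⟨hFcont, ?_⟩
    intro 𝒰 y hy
    obtain ⟨g₀, -, hg₀⟩ := isCompact_univ.ultrafilter_le_nhds (𝒰.map Prod.snd) (by simp)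
    have hsnd : Tendsto Prod.snd (𝒰 : Filter ((A →ₐ[ℂ] ℂ) × G)) (𝓝 g₀) := by
      rwa [Ultrafilter.coe_map] at hg₀
    have hfst : Tendsto Prod.fst (𝒰 : Filter ((A →ₐ[ℂ] ℂ) × G)) (𝓝 y.1) :=
      ((continuous_fst.tendsto y).comp hy).congr fun p => rfl
    have hlim : (𝒰 : Filter _) ≤ 𝓝 (y.1, g₀) := by
      have := hfst.prodMk_nhds hsnd
      exact this
    refine ⟨(y.1, g₀), ?_, hlim⟩
    exact tendsto_nhds_unique ((hFcont.tendsto (y.1, g₀)).mono_left hlim) hy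
  -- orbit maps are embeddings
  have horbit : ∀ χ : A →ₐ[ℂ] ℂ,
      Topology.IsEmbedding fun g : G => χ.comp (α g).toAlgHom := by
    intro χ
    have hc : Continuous fun g : G => χ.comp (α g).toAlgHom :=
      hσ.comp (continuous_const.prodMk continuous_id)
    have hinj : Function.Injective fun g : G => χ.comp (α g).toAlgHom := by
      intro g h hgh
      simp only at hgh
      have h2 := congrArg (fun ψ : A →ₐ[ℂ] ℂ => ψ.comp (α h⁻¹).toAlgHom) hgh
      rw [hcomp, hcomp, mul_inv_cancel, hone] at h2
      have := hfree χ (g * h⁻¹) h2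
      exact mul_inv_eq_one.mp this
    exact (hc.isClosedEmbedding hinj).toIsEmbedding
  refine ⟨hσ, hfree, hproper, horbit, ?_⟩
  -- Hausdorff quotient
  have hmkcont : Continuous (Quotient.mk S) := continuous_quotient_mk'
  have hmksurj : Function.Surjective (Quotient.mk S) := fun q => ⟨q.out, q.out_eq⟩
  have hopenmap : IsOpenMap (Quotient.mk S) := by
    intro U hU
    rw [isOpen_coinduced]
    show IsOpen (Quotient.mk S ⁻¹' (Quotient.mk S '' U))
    have hsat : Quotient.mk S ⁻¹' (Quotient.mk S '' U)
        = ⋃ g : G, (fun χ : A →ₐ[ℂ] ℂ => χ.comp (α g⁻¹).toAlgHom) ⁻¹' U := by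
      ext χ
      simp only [Set.mem_preimage, Set.mem_image, Set.mem_iUnion]
      constructor
      · rintro ⟨χ', hχ'U, hmk⟩
        obtain ⟨g, hg⟩ := (hS χ' χ).mp (Quotient.exact hmk)
        refine ⟨g, ?_⟩
        rw [← hg, hcomp, mul_inv_cancel, hone]
        exact hχ'U
      · rintro ⟨g, hg⟩
        refine ⟨χ.comp (α g⁻¹).toAlgHom, hg, ?_⟩
        exact Quotient.sound ((hS _ _).mpr ⟨g, by rw [hcomp, inv_mul_cancel, hone]⟩)
    rw [hsat]
    exact isOpen_iUnion fun g =>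
      hU.preimage (hσ.comp (continuous_id.prodMk continuous_const))
  have hq : IsOpenQuotientMap (Quotient.mk S) := ⟨hmksurj, hmkcont, hopenmap⟩
  rw [t2_iff_isClosed_diagonal]
  rw [← (hq.prodMap hq).isQuotientMap.isClosed_preimage]
  have hdiag : Prod.map (Quotient.mk S) (Quotient.mk S) ⁻¹' Set.diagonal (Quotient S)
      = Set.range (fun p : (A →ₐ[ℂ] ℂ) × G => (p.1, p.1.comp (α p.2).toAlgHom)) := by
    ext ⟨χ, χ'⟩
    simp only [Set.mem_preimage, Set.mem_diagonal_iff, Set.mem_range, Prod.map]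
    constructor
    · intro h
      obtain ⟨g, hg⟩ := (hS χ χ').mp (Quotient.exact h)
      exact ⟨(χ, g), by rw [hg]⟩
    · rintro ⟨⟨ψ, g⟩, h⟩
      injection h with h1 h2
      subst h1
      rw [← h2]
      exact Quotient.sound ((hS _ _).mpr ⟨g, rfl⟩)
  rw [hdiag]
  exact hproper.isClosedMap.isClosed_range
end

section
/- Let M and N be finite-dimensional smooth manifolds (Hausdorff, second countable, without boundary) and let f : M → N be a continuous map. Then f is smooth if and only if the composition g ∘ f : M → ℝ is smooth for every smooth function g ∈ C^∞(N,ℝ). -/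
open scoped Manifold Topology

/-- Lemma 2.5 of the paper: a continuous map `f : M → N` between finite-dimensional
smooth manifolds (Hausdorff, second countable, boundaryless) is smooth if and only if
`g ∘ f : M → ℝ` is smooth for every smooth function `g ∈ C^∞(N, ℝ)`. -/
theorem smooth_iff_comp_smooth_functions
    {m n : ℕ}
    {M : Type*} [TopologicalSpace M] [ChartedSpace (EuclideanSpace ℝ (Fin m)) M]
    [IsManifold (𝓡 m) (⊤ : ℕ∞) M] [T2Space M] [SecondCountableTopology M]
    {N : Type*} [TopologicalSpace N] [ChartedSpace (EuclideanSpace ℝ (Fin n)) N]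
    [IsManifold (𝓡 n) (⊤ : ℕ∞) N] [T2Space N] [SecondCountableTopology N]
    (f : M → N) (hf : Continuous f) :
    ContMDiff (𝓡 m) (𝓡 n) (⊤ : ℕ∞) f ↔
      ∀ g : N → ℝ, ContMDiff (𝓡 n) 𝓘(ℝ, ℝ) (⊤ : ℕ∞) g → ContMDiff (𝓡 m) 𝓘(ℝ, ℝ) (⊤ : ℕ∞) (g ∘ f) := by
  constructor
  · intro hfs g hg
    exact hg.comp hfs
  · intro H x
    set c := f x with hc
    obtain ⟨φ⟩ := (inferInstance : Nonempty (SmoothBumpFunction (𝓡 n) c))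
    set G : N → EuclideanSpace ℝ (Fin n) := fun y => φ y • extChartAt (𝓡 n) c y with hGdef
    have hG : ContMDiff (𝓡 n) 𝓘(ℝ, EuclideanSpace ℝ (Fin n)) (⊤ : ℕ∞) G :=
      φ.contMDiff_smul contMDiffOn_extChartAt
    have hGi : ∀ i, ContMDiff (𝓡 m) 𝓘(ℝ, ℝ) (⊤ : ℕ∞) (fun y => G (f y) i) := by
      intro i
      have h1 : ContMDiff (𝓡 n) 𝓘(ℝ, ℝ) (⊤ : ℕ∞) (fun y => G y i) :=
        (EuclideanSpace.proj i : EuclideanSpace ℝ (Fin n) →L[ℝ] ℝ).contMDiff.comp hG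
      exact H _ h1
    have hGf : ContMDiff (𝓡 m) 𝓘(ℝ, EuclideanSpace ℝ (Fin n)) (⊤ : ℕ∞) (G ∘ f) := by
      have h1 : ContMDiff (𝓡 m) 𝓘(ℝ, Fin n → ℝ) (⊤ : ℕ∞)
          (fun y => (EuclideanSpace.equiv (Fin n) ℝ) (G (f y))) :=
        contMDiff_pi_space.2 fun i => hGi i
      have h2 := (((EuclideanSpace.equiv (Fin n) ℝ).symm :
          (Fin n → ℝ) →L[ℝ] EuclideanSpace ℝ (Fin n)).contMDiff).comp h1
      have h3 : G ∘ f = (⇑((EuclideanSpace.equiv (Fin n) ℝ).symm :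
          (Fin n → ℝ) →L[ℝ] EuclideanSpace ℝ (Fin n)) ∘
            fun y => (EuclideanSpace.equiv (Fin n) ℝ) (G (f y))) := by
        funext y
        simp
      rw [h3]
      exact h2
    rw [contMDiffAt_iff_target]
    refine ⟨hf.continuousAt, ?_⟩
    have heq : extChartAt (𝓡 n) (f x) ∘ f =ᶠ[𝓝 x] G ∘ f := by
      have h1 : (fun y => φ (f y)) =ᶠ[𝓝 x] fun _ => (1 : ℝ) :=
        φ.eventuallyEq_one.comp_tendsto hf.continuousAt
      filter_upwards [h1] with y hy
      simp [hGdef, Function.comp, hy, hc]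
    exact hGf.contMDiffAt.congr_of_eventuallyEq heq
end

section
/- Let M be a finite-dimensional smooth manifold (Hausdorff, second countable, without boundary) and let C^∞(M,ℝ) be the unital ℝ-algebra of smooth real-valued functions on M. Then every unital ℝ-algebra homomorphism χ : C^∞(M,ℝ) → ℝ is an evaluation in some point of M; that is, there exists m ∈ M such that χ(f) = f(m) for all f ∈ C^∞(M,ℝ). -/
open scoped Manifold

set_option maxHeartbeats 1000000

/-- The unital `ℝ`-algebra `C^∞(M, ℝ)` of smooth real-valued functions on a manifold,
realized as a subalgebra of the algebra of all functions `M → ℝ`. -/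
def smoothFunctionsR (n : ℕ) (M : Type*) [TopologicalSpace M]
    [ChartedSpace (EuclideanSpace ℝ (Fin n)) M] [IsManifold (𝓡 n) (⊤ : ℕ∞) M] :
    Subalgebra ℝ (M → ℝ) where
  carrier := {f : M → ℝ | ContMDiff (𝓡 n) 𝓘(ℝ, ℝ) (⊤ : ℕ∞) f}
  mul_mem' hf hg := hf.mul hg
  add_mem' hf hg := hf.add hg
  one_mem' := contMDiff_const
  zero_mem' := contMDiff_const
  algebraMap_mem' _ := contMDiff_const

/-- Theorem B.1 (b) of the paper: every unital `ℝ`-algebra homomorphism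
`χ : C^∞(M, ℝ) → ℝ` on the algebra of smooth real-valued functions of a
finite-dimensional smooth manifold (Hausdorff, second countable, boundaryless)
is an evaluation in some point `m ∈ M`. -/
theorem algHom_of_smooth_functions_is_evaluation
    {n : ℕ} {M : Type*} [TopologicalSpace M]
    [ChartedSpace (EuclideanSpace ℝ (Fin n)) M] [IsManifold (𝓡 n) (⊤ : ℕ∞) M]
    [T2Space M] [SecondCountableTopology M]
    (χ : smoothFunctionsR n M →ₐ[ℝ] ℝ) :
    ∃ m : M, ∀ f : smoothFunctionsR n M, χ f = (f : M → ℝ) m := by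
  classical
  haveI : LocallyCompactSpace M :=
    Manifold.locallyCompact_of_finiteDimensional (𝓡 n)
  haveI : SigmaCompactSpace M := inferInstance
  by_contra hcon
  push_neg at hcon
  -- a compact exhaustion
  let K : CompactExhaustion M := CompactExhaustion.choice M
  -- a smooth "exhaustion function" h with K.find x ≤ h x
  obtain ⟨h, hh⟩ :
      ∃ g : C^(⊤ : ℕ∞)⟮𝓡 n, M; 𝓘(ℝ, ℝ), ℝ⟯, ∀ x, g x ∈ Set.Ici ((K.find x : ℝ)) := by
    apply exists_contMDiffMap_forall_mem_convex_of_local_const (𝓡 n)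
      (fun x => convex_Ici ..)
    intro x
    refine ⟨(K.find x : ℝ) + 1, ?_⟩
    have hU : interior (K (K.find x + 1)) ∈ nhds x :=
      (isOpen_interior).mem_nhds (K.subset_interior_succ _ (K.mem_find x))
    filter_upwards [hU] with y hy
    have : K.find y ≤ K.find x + 1 :=
      K.mem_iff_find_le.mp (interior_subset hy)
    have : (K.find y : ℝ) ≤ (K.find x : ℝ) + 1 := by exact_mod_cast this
    simpa [Set.mem_Ici] using this
  have hH : (h : M → ℝ) ∈ smoothFunctionsR n M := h.contMDiff
  set H : smoothFunctionsR n M := ⟨h, hH⟩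
  set c : ℝ := χ H with hc
  -- the compact set where `(h - c)^2 ≤ 1`
  set S : Set M := {x | (h x - c) ^ 2 ≤ 1} with hS
  have hScompact : IsCompact S := by
    have hclosed : IsClosed S := by
      have : Continuous fun x => (h x - c) ^ 2 :=
        ((h.contMDiff.continuous).sub continuous_const).pow 2
      exact isClosed_le this continuous_const
    refine (K.isCompact (⌈c + 1⌉₊)).of_isClosed_subset hclosed ?_
    intro x hx
    have h1 : (h x - c) ^ 2 ≤ 1 := hx
    have h2 : h x ≤ c + 1 := by nlinarith [sq_nonneg (h x - c)]
    have h3 : (K.find x : ℝ) ≤ c + 1 := le_trans (hh x) h2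
    have h4 : (K.find x : ℝ) ≤ (⌈c + 1⌉₊ : ℝ) := le_trans h3 (Nat.le_ceil _)
    exact K.mem_iff_find_le.mpr (by exact_mod_cast h4)
  -- for each m, a function in the kernel of χ not vanishing at m
  have key : ∀ m : M, ∃ g : smoothFunctionsR n M, χ g = 0 ∧ (g : M → ℝ) m ≠ 0 := by
    intro m
    obtain ⟨f, hf⟩ := hcon m
    refine ⟨f - χ f • 1, by simp, ?_⟩
    have : ((f - χ f • 1 : smoothFunctionsR n M) : M → ℝ) m = (f : M → ℝ) m - χ f := by
      simp
    rw [this]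
    intro h0
    exact hf ((sub_eq_zero.mp h0).symm)
  choose g hgχ hgne using key
  -- finite subcover of S by positivity sets of the g m
  have hcover : S ⊆ ⋃ m ∈ S, {x | (g m : M → ℝ) x ≠ 0} := by
    intro x hx
    exact Set.mem_biUnion hx (hgne x)
  obtain ⟨s, hs⟩ := hScompact.elim_finite_subcover_image
    (fun m _ => (isOpen_ne (x := (0:ℝ))).preimage (by
      exact ((g m).2 : ContMDiff (𝓡 n) 𝓘(ℝ, ℝ) (⊤ : ℕ∞) _).continuous)) hcover
  obtain ⟨hs_sub, hs_fin, hs_cover⟩ := hs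
  -- the positive function G in the kernel of χ
  set G : smoothFunctionsR n M := (H - c • 1) ^ 2 + ∑ m ∈ hs_fin.toFinset, (g m) ^ 2 with hG
  have hχG : χ G = 0 := by
    simp [hG, hc, hgχ]
  have hGpos : ∀ x, 0 < (G : M → ℝ) x := by
    intro x
    have hGx : (G : M → ℝ) x
        = (h x - c) ^ 2 + ∑ m ∈ hs_fin.toFinset, ((g m : M → ℝ) x) ^ 2 := by
      simp [hG, H]
    rw [hGx]
    by_cases hxS : x ∈ S
    · obtain ⟨m, hmM, hmx⟩ := Set.mem_iUnion₂.mp (hs_cover hxS)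
      have hm : m ∈ hs_fin.toFinset := by simpa using hmM
      have hne : (g m : M → ℝ) x ≠ 0 := hmx
      have hpos : 0 < ((g m : M → ℝ) x) ^ 2 := by positivity
      have := sq_nonneg (h x - c)
      have h2 : 0 ≤ ∑ m ∈ hs_fin.toFinset, ((g m : M → ℝ) x) ^ 2 :=
        Finset.sum_nonneg fun m _ => sq_nonneg _
      have h3 : ((g m : M → ℝ) x) ^ 2 ≤ ∑ m ∈ hs_fin.toFinset, ((g m : M → ℝ) x) ^ 2 :=
        Finset.single_le_sum (fun m _ => sq_nonneg ((g m : M → ℝ) x)) hm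
      linarith
    · have h1 : 1 < (h x - c) ^ 2 := lt_of_not_ge hxS
      have h2 : 0 ≤ ∑ m ∈ hs_fin.toFinset, ((g m : M → ℝ) x) ^ 2 :=
        Finset.sum_nonneg fun m _ => sq_nonneg _
      linarith
  -- G is invertible, contradiction
  have hGsmooth : ContMDiff (𝓡 n) 𝓘(ℝ, ℝ) (⊤ : ℕ∞) (G : M → ℝ) := G.2
  have hGinv : (fun x => ((G : M → ℝ) x)⁻¹) ∈ smoothFunctionsR n M :=
    hGsmooth.inv₀ fun x => (hGpos x).ne'
  have hmul : G * (⟨_, hGinv⟩ : smoothFunctionsR n M) = 1 := by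
    ext x
    exact mul_inv_cancel₀ (hGpos x).ne'
  have : (1 : ℝ) = 0 := by
    calc (1 : ℝ) = χ 1 := (map_one χ).symm
    _ = χ G * χ ⟨_, hGinv⟩ := by rw [← hmul, map_mul]
    _ = 0 := by rw [hχG, zero_mul]
  exact one_ne_zero this
end

section
/- Let M be a finite-dimensional smooth manifold (Hausdorff, second countable, without boundary) and let C^∞(M,ℂ) be the unital ℂ-algebra of smooth complex-valued functions on M. Then every unital ℂ-algebra homomorphism χ : C^∞(M,ℂ) → ℂ is an evaluation in some point of M; that is, there exists m ∈ M such that χ(f) = f(m) for all f ∈ C^∞(M,ℂ). -/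
open scoped Manifold

/-- The unital `ℂ`-algebra `C^∞(M, ℂ)` of smooth complex-valued functions on a real
manifold, realized as a subalgebra of the algebra of all functions `M → ℂ`. -/
def smoothFunctionsC (n : ℕ) (M : Type*) [TopologicalSpace M]
    [ChartedSpace (EuclideanSpace ℝ (Fin n)) M] [IsManifold (𝓡 n) (⊤ : ℕ∞) M] :
    Subalgebra ℂ (M → ℂ) where
  carrier := {f : M → ℂ | ContMDiff (𝓡 n) 𝓘(ℝ, ℂ) (⊤ : ℕ∞) f}
  mul_mem' hf hg := by
    exact (contDiff_fst.mul contDiff_snd).comp_contMDiff (hf.prodMk_space hg)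
  add_mem' hf hg := hf.add hg
  one_mem' := contMDiff_const
  zero_mem' := contMDiff_const
  algebraMap_mem' _ := contMDiff_const

section aux
variable {n : ℕ} {M : Type*} [TopologicalSpace M]
    [ChartedSpace (EuclideanSpace ℝ (Fin n)) M] [IsManifold (𝓡 n) (⊤ : ℕ∞) M]

theorem smoothFunctionsC.spectrum (χ : smoothFunctionsC n M →ₐ[ℂ] ℂ)
    (f : smoothFunctionsC n M) : ∃ x : M, (f : M → ℂ) x = χ f := by
  by_contra hc
  push_neg at hc
  have hne : ∀ x, (f : M → ℂ) x - χ f ≠ 0 := fun x => sub_ne_zero.2 (hc x)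
  have hf : ContMDiff (𝓡 n) 𝓘(ℝ, ℂ) (⊤ : ℕ∞) (f : M → ℂ) := f.2
  have hg : ContMDiff (𝓡 n) 𝓘(ℝ, ℂ) (⊤ : ℕ∞) (fun x => ((f : M → ℂ) x - χ f)⁻¹) := fun x =>
    ContDiffAt.comp_contMDiffAt (g := Inv.inv) (f := fun y => (f : M → ℂ) y - χ f)
      (contDiffAt_inv ℝ (hne x)) ((hf x).sub contMDiffAt_const)
  have hone : (f - algebraMap ℂ (smoothFunctionsC n M) (χ f)) * ⟨_, hg⟩ = 1 := by
    apply Subtype.ext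
    funext x
    show (((f - algebraMap ℂ (smoothFunctionsC n M) (χ f)) * ⟨_, hg⟩ :
        smoothFunctionsC n M) : M → ℂ) x = (1 : M → ℂ) x
    have h1 : (((f - algebraMap ℂ (smoothFunctionsC n M) (χ f)) * ⟨_, hg⟩ :
        smoothFunctionsC n M) : M → ℂ) x
        = ((f : M → ℂ) x - χ f) * ((f : M → ℂ) x - χ f)⁻¹ := rfl
    rw [h1, mul_inv_cancel₀ (hne x)]
    rfl
  have := congrArg χ hone
  rw [map_mul, map_one, map_sub, AlgHom.commutes] at this
  simp at this


theorem smoothFunctionsC.conj_mem (f : smoothFunctionsC n M) :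
    (fun x => (starRingEnd ℂ) ((f : M → ℂ) x)) ∈ smoothFunctionsC n M := by
  have : ContMDiff (𝓡 n) 𝓘(ℝ, ℂ) (⊤ : ℕ∞) ((⇑Complex.conjCLE) ∘ (f : M → ℂ)) :=
    Complex.conjCLE.contDiff.comp_contMDiff f.2
  show ContMDiff (𝓡 n) 𝓘(ℝ, ℂ) (⊤ : ℕ∞) _
  simpa [Function.comp_def, Complex.conjCLE_apply] using this

set_option maxHeartbeats 1000000 in
theorem exists_smooth_sublevel_compact [T2Space M] [SecondCountableTopology M] :
    ∃ h : M → ℝ, ContMDiff (𝓡 n) 𝓘(ℝ) (⊤ : ℕ∞) h ∧ ∀ r : ℝ, IsCompact {x | h x ≤ r} := by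
  haveI : LocallyCompactSpace (EuclideanSpace ℝ (Fin n)) := inferInstance
  haveI : LocallyCompactSpace M :=
    ChartedSpace.locallyCompactSpace (EuclideanSpace ℝ (Fin n)) M
  haveI : SigmaCompactSpace M := inferInstance
  set K := (CompactExhaustion.choice M).shiftr with hK
  set U : ℕ → Set M := fun i => interior (K (i + 2)) \ K i with hU
  have hUo : ∀ i, IsOpen (U i) := fun i =>
    isOpen_interior.sdiff (K.isCompact i).isClosed
  have hUc : (Set.univ : Set M) ⊆ ⋃ i, U i := by
    intro x _
    have h0 : x ∉ K 0 := Set.notMem_empty x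
    have hj : 1 ≤ K.find x := by
      by_contra hcon
      exact h0 (by simpa [Nat.lt_one_iff.1 (not_le.1 hcon)] using K.mem_find x)
    refine Set.mem_iUnion.2 ⟨K.find x - 1, ?_, ?_⟩
    · exact K.subset_interior (by omega) (K.mem_find x)
    · intro hx
      exact absurd (K.mem_iff_find_le.1 hx) (by omega)
  obtain ⟨f, hf⟩ :=
    SmoothPartitionOfUnity.exists_isSubordinate (𝓡 n) isClosed_univ U hUo hUc
  refine ⟨fun x => ∑ᶠ i, f i x • (i : ℝ),
    hf.contMDiff_finsum_smul hUo (fun i => contMDiffOn_const), ?_⟩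
  have key : ∀ m : ℕ, ∀ x : M, x ∉ K (m + 1) → (m : ℝ) ≤ ∑ᶠ i, f i x • (i : ℝ) := by
    intro m x hx
    have : ∑ᶠ i, f i x • (i : ℝ) ∈ Set.Ici (m : ℝ) := by
      refine f.finsum_smul_mem_convex (g := fun i _ => (i:ℝ)) (t := Set.Ici (m:ℝ))
        (Set.mem_univ x) (fun i hi => ?_) (convex_Ici _)
      have hxU : x ∈ U i := hf i (subset_tsupport _ (by simpa using hi))
      have h2 : ¬ (i + 2 ≤ m + 1) := fun hle =>
        hx (K.subset hle (interior_subset hxU.1))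
      simpa using (Nat.cast_le (α := ℝ)).2 (by omega : m ≤ i)
    exact this
  intro r
  set m := ⌈r⌉₊ + 1 with hm
  have hsm : ContMDiff (𝓡 n) 𝓘(ℝ) (⊤ : ℕ∞) fun x => ∑ᶠ i, f i x • (i : ℝ) :=
    hf.contMDiff_finsum_smul hUo (fun i => contMDiffOn_const)
  have hcont : Continuous fun x => ∑ᶠ i, f i x • (i : ℝ) := hsm.continuous
  refine (K.isCompact (m + 1)).of_isClosed_subset
    (isClosed_le hcont continuous_const) ?_
  intro x hx
  by_contra hxk
  have h1 := key m x hxk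
  have h2 : r < (m : ℝ) := by
    have := Nat.le_ceil r
    push_cast [hm]
    linarith
  exact absurd (le_trans h1 hx) (not_le.2 h2)

end aux


set_option maxHeartbeats 1000000 in
set_option synthInstance.maxHeartbeats 400000 in
/-- Corollary B.2 of the paper: every unital `ℂ`-algebra homomorphism
`χ : C^∞(M, ℂ) → ℂ` on the algebra of smooth complex-valued functions of a
finite-dimensional smooth manifold (Hausdorff, second countable, boundaryless)
is an evaluation in some point `m ∈ M`. -/
theorem algHom_of_smooth_complex_functions_is_evaluation
    {n : ℕ} {M : Type*} [TopologicalSpace M]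
    [ChartedSpace (EuclideanSpace ℝ (Fin n)) M] [IsManifold (𝓡 n) (⊤ : ℕ∞) M]
    [T2Space M] [SecondCountableTopology M]
    (χ : smoothFunctionsC n M →ₐ[ℂ] ℂ) :
    ∃ m : M, ∀ f : smoothFunctionsC n M, χ f = (f : M → ℂ) m := by
  classical
  obtain ⟨h, hsm, hcomp⟩ := exists_smooth_sublevel_compact (n := n) (M := M)
  have hmemH : (fun x => ((h x : ℂ))) ∈ smoothFunctionsC n M := by
    have : ContMDiff (𝓡 n) 𝓘(ℝ, ℂ) (⊤ : ℕ∞) ((⇑Complex.ofRealCLM) ∘ h) :=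
      Complex.ofRealCLM.contDiff.comp_contMDiff hsm
    show ContMDiff (𝓡 n) 𝓘(ℝ, ℂ) (⊤ : ℕ∞) _
    simpa [Function.comp_def] using this
  set H : smoothFunctionsC n M := ⟨_, hmemH⟩ with hHdef
  set t : smoothFunctionsC n M → Set M := fun f => {x | (f : M → ℂ) x = χ f} with ht
  have htc : ∀ f, IsClosed (t f) := fun f =>
    isClosed_eq f.2.continuous continuous_const
  have hZsub : t H ⊆ {x | h x ≤ (χ H).re} := by
    intro x hx
    simp only [ht, Set.mem_setOf_eq] at hx ⊢
    have hxe : ((h x : ℂ)) = χ H := hx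
    rw [← hxe]
    simp
  have hZc : IsCompact (t H) :=
    (hcomp (χ H).re).of_isClosed_subset (htc H) hZsub
  have hfin : ∀ u : Finset (smoothFunctionsC n M), (t H ∩ ⋂ f ∈ u, t f).Nonempty := by
    intro u
    set d : smoothFunctionsC n M → smoothFunctionsC n M := fun f =>
      (f - algebraMap ℂ _ (χ f)) *
        ⟨_, smoothFunctionsC.conj_mem (f - algebraMap ℂ _ (χ f))⟩ with hd
    have hdval : ∀ (f : smoothFunctionsC n M) (x : M),
        ((d f : smoothFunctionsC n M) : M → ℂ) x
          = ((Complex.normSq ((f : M → ℂ) x - χ f) : ℝ) : ℂ) := by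
      intro f x
      have h1 : ((d f : smoothFunctionsC n M) : M → ℂ) x
          = ((f : M → ℂ) x - χ f) * (starRingEnd ℂ) ((f : M → ℂ) x - χ f) := rfl
      rw [h1, Complex.mul_conj]
    have hdχ : ∀ f, χ (d f) = 0 := by
      intro f
      simp [hd, map_mul, map_sub, AlgHom.commutes]
    set g := d H + ∑ f ∈ u, d f with hg
    have hχg : χ g = 0 := by
      simp [hg, map_add, map_sum, hdχ]
    obtain ⟨x, hx⟩ := smoothFunctionsC.spectrum χ g
    rw [hχg] at hx
    have hgx : ((g : smoothFunctionsC n M) : M → ℂ) x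
        = ((Complex.normSq ((H : M → ℂ) x - χ H)
            + ∑ f ∈ u, Complex.normSq ((f : M → ℂ) x - χ f) : ℝ) : ℂ) := by
      have h1 : ((g : smoothFunctionsC n M) : M → ℂ) x
          = ((d H : smoothFunctionsC n M) : M → ℂ) x
            + ∑ f ∈ u, ((d f : smoothFunctionsC n M) : M → ℂ) x := by
        simp [hg]
      rw [h1, hdval]
      push_cast
      congr 1
      exact Finset.sum_congr rfl fun f _ => hdval f x
    rw [hgx] at hx
    have h0 : Complex.normSq ((H : M → ℂ) x - χ H)
        + ∑ f ∈ u, Complex.normSq ((f : M → ℂ) x - χ f) = 0 := by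
      exact_mod_cast hx
    have hnn : 0 ≤ ∑ f ∈ u, Complex.normSq ((f : M → ℂ) x - χ f) :=
      Finset.sum_nonneg fun f _ => Complex.normSq_nonneg _
    obtain ⟨hH0, hsum0⟩ :=
      (add_eq_zero_iff_of_nonneg (Complex.normSq_nonneg _) hnn).1 h0
    refine ⟨x, ?_, ?_⟩
    · show (H : M → ℂ) x = χ H
      exact sub_eq_zero.1 (Complex.normSq_eq_zero.1 hH0)
    · refine Set.mem_iInter₂.2 fun f hf => ?_
      show (f : M → ℂ) x = χ f
      have := (Finset.sum_eq_zero_iff_of_nonneg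
        (fun (f' : smoothFunctionsC n M) _ =>
          Complex.normSq_nonneg ((f' : M → ℂ) x - χ f'))).1 hsum0 f hf
      exact sub_eq_zero.1 (Complex.normSq_eq_zero.1 this)
  obtain ⟨m, _, hmt⟩ := hZc.inter_iInter_nonempty t htc hfin
  exact ⟨m, fun f => (Set.mem_iInter.1 hmt f).symm⟩
end

section
/- Let M be a finite-dimensional smooth manifold (Hausdorff, second countable, without boundary). Then the map Φ : M → Γ_{C^∞(M,ℂ)}, m ↦ δ_m, from M to the spectrum of C^∞(M,ℂ) equipped with the topology of pointwise convergence, is a homeomorphism: it is bijective, continuous, and open. -/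
open scoped Manifold
open Set

section Aux

variable {n : ℕ} {M : Type*} [TopologicalSpace M]
    [ChartedSpace (EuclideanSpace ℝ (Fin n)) M] [IsManifold (𝓡 n) (⊤ : ℕ∞) M]

theorem aux_mem_iff {f : M → ℂ} :
    f ∈ smoothFunctionsC n M ↔ ContMDiff (𝓡 n) 𝓘(ℝ, ℂ) (⊤ : ℕ∞) f := Iff.rfl

theorem aux_ofReal_mem {g : M → ℝ} (hg : ContMDiff (𝓡 n) 𝓘(ℝ, ℝ) (⊤ : ℕ∞) g) :
    (fun x => (g x : ℂ)) ∈ smoothFunctionsC n M :=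
  Complex.ofRealCLM.contDiff.comp_contMDiff hg

noncomputable def auxConj (f : smoothFunctionsC n M) : smoothFunctionsC n M :=
  ⟨fun x => (starRingEnd ℂ) ((f : M → ℂ) x),
    (Complex.conjCLE.toContinuousLinearMap.contDiff).comp_contMDiff f.2⟩

theorem auxConj_apply (f : smoothFunctionsC n M) (x : M) :
    ((auxConj f : smoothFunctionsC n M) : M → ℂ) x = (starRingEnd ℂ) ((f : M → ℂ) x) := rfl

theorem aux_inv_mem {f : M → ℂ} (hf : f ∈ smoothFunctionsC n M) (h0 : ∀ x, f x ≠ 0) :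
    (fun x => (f x)⁻¹) ∈ smoothFunctionsC n M :=
  fun x => (contDiffAt_inv ℝ (h0 x)).comp_contMDiffAt ((aux_mem_iff.1 hf) x)

theorem aux_continuous {f : M → ℂ} (hf : f ∈ smoothFunctionsC n M) : Continuous f :=
  (aux_mem_iff.1 hf).continuous

theorem aux_exists_proper [T2Space M] [SecondCountableTopology M] :
    ∃ h : M → ℝ, ContMDiff (𝓡 n) 𝓘(ℝ, ℝ) (⊤ : ℕ∞) h ∧ ∀ N : ℕ, IsCompact {x : M | h x ≤ N} := by
  haveI : LocallyCompactSpace M := Manifold.locallyCompact_of_finiteDimensional (𝓡 n)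
  set K := CompactExhaustion.choice M
  obtain ⟨g, hg⟩ := exists_contMDiffMap_forall_mem_convex_of_local_const (𝓡 n) (n := (⊤ : ℕ∞))
      (t := fun x : M => Ici ((K.find x : ℝ))) (fun x => convex_Ici _)
      (fun x => by
        refine ⟨(K.find x + 1 : ℕ), ?_⟩
        have hx : x ∈ interior (K (K.find x + 1)) :=
          K.subset_interior_succ _ (K.mem_find x)
        filter_upwards [isOpen_interior.mem_nhds hx] with y hy
        have : K.find y ≤ K.find x + 1 :=
          K.mem_iff_find_le.1 (interior_subset hy)
        exact mem_Ici.2 (by exact_mod_cast this))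
  refine ⟨g, g.contMDiff, fun N => ?_⟩
  refine (K.isCompact N).of_isClosed_subset ?_ ?_
  · exact isClosed_le g.contMDiff.continuous continuous_const
  · intro x hx
    have h1 : (K.find x : ℝ) ≤ N := le_trans (hg x) hx
    exact K.mem_iff_find_le.2 (by exact_mod_cast h1)

end Aux

set_option maxHeartbeats 2000000 in
set_option synthInstance.maxHeartbeats 400000 in
/-- Proposition B.3 of the paper: for a finite-dimensional smooth manifold `M`
(Hausdorff, second countable, boundaryless), the map `Φ : M → Γ_{C^∞(M, ℂ)}, m ↦ δ_m`
sending a point to the evaluation homomorphism at that point is a homeomorphism onto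
the spectrum of `C^∞(M, ℂ)` with the topology of pointwise convergence: it is
bijective, continuous and open. -/
theorem evaluation_map_homeomorphism
    {n : ℕ} {M : Type*} [TopologicalSpace M]
    [ChartedSpace (EuclideanSpace ℝ (Fin n)) M] [IsManifold (𝓡 n) (⊤ : ℕ∞) M]
    [T2Space M] [SecondCountableTopology M] :
    Function.Bijective
        (fun m : M => (Pi.evalAlgHom ℂ (fun _ : M => ℂ) m).comp (smoothFunctionsC n M).val)
    ∧ Continuous
        (fun m : M => (Pi.evalAlgHom ℂ (fun _ : M => ℂ) m).comp (smoothFunctionsC n M).val)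
    ∧ IsOpenMap
        (fun m : M => (Pi.evalAlgHom ℂ (fun _ : M => ℂ) m).comp (smoothFunctionsC n M).val) := by
  haveI : LocallyCompactSpace M := Manifold.locallyCompact_of_finiteDimensional (𝓡 n)
  set A := smoothFunctionsC n M with hA
  set Φ : M → ((A : Subalgebra ℂ (M → ℂ)) →ₐ[ℂ] ℂ) :=
    fun m => (Pi.evalAlgHom ℂ (fun _ : M => ℂ) m).comp A.val with hΦ
  have hΦapp : ∀ (m : M) (f : A), Φ m f = (f : M → ℂ) m := fun _ _ => rfl
  -- bump functions
  have bump : ∀ (s : Set M) (m : M), IsClosed s → m ∉ s →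
      ∃ f : A, (f : M → ℂ) m = 1 ∧ ∀ x ∈ s, (f : M → ℂ) x = 0 := by
    intro s m hs hm
    obtain ⟨f, h0, h1, -⟩ := exists_contMDiffMap_zero_one_of_isClosed (𝓡 n) (n := (⊤ : ℕ∞)) hs
      (isClosed_singleton (x := m)) (disjoint_singleton_right.2 hm)
    refine ⟨⟨fun x => (f x : ℂ), aux_ofReal_mem f.contMDiff⟩, ?_, ?_⟩
    · show ((f m : ℝ) : ℂ) = 1
      rw [h1 (mem_singleton m)]; norm_num
    · intro x hx
      show ((f x : ℝ) : ℂ) = 0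
      rw [h0 hx]; norm_num
  have hinj : Function.Injective Φ := by
    intro m m' he
    by_contra hne
    obtain ⟨f, hf1, hf0⟩ := bump {m'} m isClosed_singleton (by simpa using hne)
    have h2 : Φ m f = Φ m' f := by rw [he]
    rw [hΦapp, hΦapp, hf1, hf0 m' (mem_singleton m')] at h2
    exact one_ne_zero h2
  have hsurj : Function.Surjective Φ := by
    intro χ
    by_contra hcon
    push_neg at hcon
    have key : ∀ m : M, ∃ f : A, χ f = 0 ∧ (f : M → ℂ) m ≠ 0 := by
      intro m
      have h1 : ¬ ∀ f : A, Φ m f = χ f := fun h => hcon m (AlgHom.ext h)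
      push_neg at h1
      obtain ⟨f, hf⟩ := h1
      refine ⟨f - χ f • 1, ?_, ?_⟩
      · rw [map_sub, map_smul, map_one, smul_eq_mul, mul_one, sub_self]
      · have hv : ((f - χ f • 1 : A) : M → ℂ) m = (f : M → ℂ) m - χ f := by
          push_cast
          simp
        rw [hv]
        exact sub_ne_zero.2 (by simpa [hΦapp] using hf)
    choose g hg0 hgm using key
    obtain ⟨h, hsm, hcomp⟩ := aux_exists_proper (n := n) (M := M)
    set H : A := ⟨fun x => (h x : ℂ), aux_ofReal_mem hsm⟩ with hH
    set c : ℂ := χ H with hc'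
    obtain ⟨N, hN⟩ := exists_nat_ge ‖c‖
    set Z : Set M := {x | (h x : ℂ) = c} with hZ
    have hZc : IsCompact Z := by
      refine (hcomp N).of_isClosed_subset ?_ ?_
      · exact isClosed_eq (Complex.continuous_ofReal.comp hsm.continuous) continuous_const
      · intro x hx
        have h1 : ‖((h x : ℝ) : ℂ)‖ = ‖c‖ := by rw [hx]
        rw [Complex.norm_real, Real.norm_eq_abs] at h1
        calc h x ≤ |h x| := le_abs_self _
          _ = ‖c‖ := h1
          _ ≤ N := hN
    have hZcover : Z ⊆ ⋃ m : M, ((g m : M → ℂ) ⁻¹' {0}ᶜ) :=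
      fun x _ => mem_iUnion.2 ⟨x, hgm x⟩
    obtain ⟨t, ht⟩ := hZc.elim_finite_subcover _
      (fun m => isOpen_compl_singleton.preimage (aux_continuous (g m).2)) hZcover
    set Q : A := (H - c • 1) * auxConj (H - c • 1) + ∑ m ∈ t, g m * auxConj (g m) with hQ
    have hχQ : χ Q = 0 := by
      have h1 : χ (H - c • 1) = 0 := by
        rw [map_sub, map_smul, map_one, smul_eq_mul, mul_one, ← hc', sub_self]
      rw [hQ, map_add, map_mul, h1, zero_mul, map_sum, zero_add]
      refine Finset.sum_eq_zero fun m _ => ?_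
      rw [map_mul, hg0 m, zero_mul]
    have hQval : ∀ x, (Q : M → ℂ) x =
        ((Complex.normSq ((h x : ℂ) - c) + ∑ m ∈ t, Complex.normSq ((g m : M → ℂ) x) : ℝ) : ℂ) := by
      intro x
      have : (Q : M → ℂ) x = ((H : M → ℂ) x - c) * (starRingEnd ℂ) ((H : M → ℂ) x - c)
          + ∑ m ∈ t, (g m : M → ℂ) x * (starRingEnd ℂ) ((g m : M → ℂ) x) := by
        simp [hQ, auxConj]
      rw [this]
      simp only [Complex.mul_conj]
      push_cast
      ring
    have hQne : ∀ x, (Q : M → ℂ) x ≠ 0 := by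
      intro x
      rw [hQval x, Complex.ofReal_ne_zero]
      have hsumnn : ∀ m ∈ t, (0:ℝ) ≤ Complex.normSq ((g m : M → ℂ) x) :=
        fun m _ => Complex.normSq_nonneg _
      rcases eq_or_ne ((h x : ℂ)) c with hxz | hxz
      · have hx : x ∈ Z := hxz
        obtain ⟨m, hmt, hmx⟩ := mem_iUnion₂.1 (ht hx)
        have hgx : (g m : M → ℂ) x ≠ 0 := hmx
        have hpos : (0:ℝ) < ∑ m ∈ t, Complex.normSq ((g m : M → ℂ) x) :=
          Finset.sum_pos' hsumnn ⟨m, hmt, Complex.normSq_pos.2 hgx⟩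
        have := Complex.normSq_nonneg ((h x : ℂ) - c)
        positivity
      · have h1 : 0 < Complex.normSq ((h x : ℂ) - c) :=
          Complex.normSq_pos.2 (sub_ne_zero.2 hxz)
        have h2 : (0:ℝ) ≤ ∑ m ∈ t, Complex.normSq ((g m : M → ℂ) x) :=
          Finset.sum_nonneg hsumnn
        positivity
    set Qi : A := ⟨fun x => ((Q : M → ℂ) x)⁻¹, aux_inv_mem Q.2 hQne⟩ with hQi
    have hQQi : Q * Qi = 1 := by
      apply Subtype.ext
      funext x
      show (Q : M → ℂ) x * ((Q : M → ℂ) x)⁻¹ = 1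
      exact mul_inv_cancel₀ (hQne x)
    have : (1 : ℂ) = 0 := by
      calc (1 : ℂ) = χ (Q * Qi) := by rw [hQQi, map_one]
        _ = χ Q * χ Qi := map_mul χ _ _
        _ = 0 := by rw [hχQ, zero_mul]
    exact one_ne_zero this
  have hcont : Continuous Φ := by
    apply continuous_induced_rng.2
    exact continuous_pi fun f => aux_continuous f.2
  refine ⟨⟨hinj, hsurj⟩, hcont, ?_⟩
  intro U hU
  rw [isOpen_iff_forall_mem_open]
  rintro χ ⟨m, hmU, rfl⟩
  obtain ⟨f, hf1, hf0⟩ := bump Uᶜ m hU.isClosed_compl (by simpa using hmU)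
  refine ⟨{χ' : A →ₐ[ℂ] ℂ | χ' f ≠ 0}, ?_, ?_, ?_⟩
  · intro χ' hχ'
    obtain ⟨m', rfl⟩ := hsurj χ'
    refine ⟨m', ?_, rfl⟩
    by_contra hm'
    exact hχ' (by rw [hΦapp]; exact hf0 m' hm')
  · have hset : {χ' : (A : Subalgebra ℂ (M → ℂ)) →ₐ[ℂ] ℂ | χ' f ≠ 0}
        = (fun χ' : (A : Subalgebra ℂ (M → ℂ)) →ₐ[ℂ] ℂ => (χ' : A → ℂ)) ⁻¹'
          ((fun φ : A → ℂ => φ f) ⁻¹' {0}ᶜ) := rfl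
    rw [hset]
    exact (isOpen_compl_singleton.preimage (continuous_apply f)).preimage continuous_induced_dom
  · show Φ m f ≠ 0
    rw [hΦapp, hf1]
    exact one_ne_zero
end
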